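/- Consider Bernoulli CMP on the graph ℕ (the path graph in which n and n+1 are adjacent for all n ≥ 0). For any expansion exponent α ≥ 1 there exists p < 1 such that, with positive probability under the product Bernoulli(p) measure, the cumulatively merged partition 𝒞(ℕ, r, α) contains an infinite cluster; i.e. the critical parameter p_c(α) is strictly less than 1. -/

import Mathlib

open scoped ENNReal NNReal
open MeasureTheory

namespace CMPPaper

variable {V : Type*}

/-- Graph distance between two subsets of vertices, valued in `ℝ≥0∞`
(`⊤` when one of the sets is empty). -/
noncomputable def setDist (G : SimpleGraph V) (A B : Set V) : ℝ≥0∞ :=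
  ⨅ (x : A) (y : B), (G.dist x.1 y.1 : ℝ≥0∞)

/-- Total weight `r(A) = Σ_{x ∈ A} r(x) ∈ [0,∞]` of a set of vertices. -/
noncomputable def wt (r : V → ℝ≥0) (A : Set V) : ℝ≥0∞ :=
  ∑' x : A, (r x.1 : ℝ≥0∞)

/-- A partition (encoded as a setoid) of the vertex set is `(r,α)`-admissible if any two
distinct clusters `C ≠ C'` satisfy `d(C,C') > min(r(C), r(C'))^α`. -/
def Admissible (G : SimpleGraph V) (r : V → ℝ≥0) (α : ℝ) (s : Setoid V) : Prop :=
  ∀ C ∈ s.classes, ∀ C' ∈ s.classes, C ≠ C' →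
    (min (wt r C) (wt r C')) ^ α < setDist G C C'

/-- The cumulatively merged partition: the finest `(r,α)`-admissible partition, i.e. the
intersection (infimum as setoids) of all `(r,α)`-admissible partitions. -/
noncomputable def CMP (G : SimpleGraph V) (r : V → ℝ≥0) (α : ℝ) : Setoid V :=
  sInf {s : Setoid V | Admissible G r α s}

/-- The cluster of the CMP containing `x`. -/
def cluster (G : SimpleGraph V) (r : V → ℝ≥0) (α : ℝ) (x : V) : Set V :=
  {y | (CMP G r α) x y}

/-- The ball `B(A, l) = {z : d(z,A) ≤ l}` around a set of vertices. -/
def ballSet (G : SimpleGraph V) (A : Set V) (l : ℝ≥0∞) : Set V :=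
  {z | ∃ a ∈ A, (G.dist z a : ℝ≥0∞) ≤ l}

/-- A subset `H` of the vertices is stable if every cluster `C` of the CMP of the induced
subgraph on `H` (with the restricted weights) satisfies `B(C, r(C)^α) ⊆ H`. -/
def IsStable (G : SimpleGraph V) (r : V → ℝ≥0) (α : ℝ) (H : Set V) : Prop :=
  ∀ C ∈ (CMP (G.induce H) (fun x : H => r x) α).classes,
    ballSet G (Subtype.val '' C) ((wt (fun x : H => r x) C) ^ α) ⊆ H

/-- The stabiliser of `W`: the smallest stable set containing `W`, i.e. the intersection of
all stable sets containing `W`. -/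
def stabiliser (G : SimpleGraph V) (r : V → ℝ≥0) (α : ℝ) (W : Set V) : Set V :=
  ⋂₀ {H : Set V | IsStable G r α H ∧ W ⊆ H}

open Classical in
/-- The merging operator `M_{x,y}`: if the clusters of `x` and `y` are distinct and
`d(x,y) ≤ min(r(𝒞_x), r(𝒞_y))^α`, merge them (take the smallest coarsening of `s`
relating `x` and `y`); otherwise leave the partition unchanged. -/
noncomputable def mergeOp (G : SimpleGraph V) (r : V → ℝ≥0) (α : ℝ) (x y : V)
    (s : Setoid V) : Setoid V :=
  if ¬ s x y ∧ (G.dist x y : ℝ≥0∞) ≤ (min (wt r {u | s x u}) (wt r {u | s y u})) ^ α then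
    sInf {t : Setoid V | s ≤ t ∧ t x y}
  else s

/-- The relation `C ↦ C'` (`C'` descends from `C`) on clusters of the CMP. -/
def Descends (G : SimpleGraph V) (r : V → ℝ≥0) (α : ℝ) (C C' : Set V) : Prop :=
  C ∈ (CMP G r α).classes ∧ C' ∈ (CMP G r α).classes ∧ C ≠ C' ∧
    setDist G C C' ≤ (wt r C) ^ α

/-- Integer part of an extended nonnegative real, valued in `ℕ∞`. -/
noncomputable def efloor (x : ℝ≥0∞) : ℕ∞ :=
  if x = ⊤ then ⊤ else (⌊x.toReal⌋₊ : ℕ∞)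

/-- The bound `max(w log₂ w / 2, 0)` (for `α = 1`), resp. `w^α/(2^α-2)` (for `α ≠ 1`),
on the diameter of a cluster of total weight `w`. -/
noncomputable def diamBound (α : ℝ) (w : ℝ≥0∞) : ℝ≥0∞ :=
  if α = 1 then
    (if w = ⊤ then ⊤ else ENNReal.ofReal (max (w.toReal * Real.logb 2 w.toReal / 2) 0))
  else w ^ α / ((2 : ℝ≥0∞) ^ α - 2)

/-- The relation `C →η C'` on clusters of the CMP:  `d(C,C') ≤ η·r(C)^α`. -/
def EtaDesc (G : SimpleGraph V) (r : V → ℝ≥0) (α η : ℝ) (C C' : Set V) : Prop :=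
  C ∈ (CMP G r α).classes ∧ C' ∈ (CMP G r α).classes ∧ C ≠ C' ∧
    setDist G C C' ≤ ENNReal.ofReal η * (wt r C) ^ α

/-- The `η`-stabiliser of a vertex `x`: the union of `𝒞_x` together with all clusters
reachable from `𝒞_x` by a finite oriented path for the relation `→η`. -/
def etaStab (G : SimpleGraph V) (r : V → ℝ≥0) (α η : ℝ) (x : V) : Set V :=
  ⋃₀ {C' | Relation.ReflTransGen (EtaDesc G r α η) (cluster G r α x) C'}

/-- The path graph on `ℕ`: `m` and `m+1` are adjacent. -/
def pathGraphN : SimpleGraph ℕ := SimpleGraph.fromRel (fun m n => n = m + 1)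

/-- The two-sided path graph on `ℤ`: `k` and `k+1` are adjacent. -/
def pathGraphZ : SimpleGraph ℤ := SimpleGraph.fromRel (fun a b => b = a + 1)

/-- The hypercubic lattice `ℤ^d`: `x` and `y` are adjacent iff `‖x-y‖₁ = 1`. -/
def latticeGraph (d : ℕ) : SimpleGraph (Fin d → ℤ) :=
  SimpleGraph.fromRel (fun x y => (∑ i, |x i - y i|) = 1)

/-- The CMP of the weighted graph `(G, r)` with expansion exponent `α` has an
infinite cluster. -/
def HasInfiniteCluster (G : SimpleGraph V) (r : V → ℝ≥0) (α : ℝ) : Prop :=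
  ∃ C ∈ (CMP G r α).classes, C.Infinite

/-- `w` is an i.i.d. family of Bernoulli(`p`) weights indexed by `V`, under the
probability measure `μ`. -/
def IsBernoulliField {Ω : Type*} [MeasurableSpace Ω] (μ : Measure Ω)
    (p : ℝ) (w : Ω → V → ℝ≥0) : Prop :=
  (∀ x : V, Measurable fun ω => w ω x) ∧
  (∀ ω x, w ω x = 0 ∨ w ω x = 1) ∧
  (∀ x : V, μ {ω | w ω x = 1} = ENNReal.ofReal p) ∧
  ProbabilityTheory.iIndepFun (m := fun _ : V => inferInstance) (fun x ω => w ω x) μ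

/-- `w` is an i.i.d. family of weights indexed by `V`, each with law `ν`, under the
probability measure `μ`. -/
def IsIIDField {Ω : Type*} [MeasurableSpace Ω] (μ : Measure Ω)
    (ν : Measure ℝ≥0) (w : Ω → V → ℝ≥0) : Prop :=
  (∀ x : V, Measurable fun ω => w ω x) ∧
  (∀ x : V, μ.map (fun ω => w ω x) = ν) ∧
  ProbabilityTheory.iIndepFun (m := fun _ : V => inferInstance) (fun x ω => w ω x) μ

-- ## Part 1 : path graph distance, forced sets, merging

lemma path_adj (n : ℕ) : pathGraphN.Adj n (n+1) := by
  rw [pathGraphN, SimpleGraph.fromRel_adj]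
  exact ⟨by omega, Or.inl rfl⟩

lemma path_walk (a d : ℕ) : ∃ w : pathGraphN.Walk a (a+d), w.length = d := by
  induction d with
  | zero => exact ⟨SimpleGraph.Walk.nil, rfl⟩
  | succ d ih =>
      obtain ⟨w, hw⟩ := ih
      exact ⟨w.concat (path_adj (a+d)), by simp [SimpleGraph.Walk.length_concat, hw]⟩

lemma path_dist_le {a b k : ℕ} (hab : a ≤ b) (h : b - a ≤ k) : pathGraphN.dist a b ≤ k := by
  obtain ⟨d, rfl⟩ : ∃ d, b = a + d := ⟨b - a, by omega⟩
  obtain ⟨w, hw⟩ := path_walk a d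
  have := SimpleGraph.dist_le w
  omega

/-- `X` is a finite set of vertices of weight ≥ 1 which every admissible partition
puts inside one cluster. -/
def ForcedSet (r : ℕ → ℝ≥0) (α : ℝ) (X : Finset ℕ) : Prop :=
  X.Nonempty ∧ (∀ x ∈ X, 1 ≤ r x) ∧
    ∀ s : Setoid ℕ, Admissible pathGraphN r α s → ∀ x ∈ X, ∀ y ∈ X, s x y

lemma card_le_wt {r : ℕ → ℝ≥0} {C : Set ℕ} {X : Finset ℕ}
    (h1 : ∀ x ∈ X, 1 ≤ r x) (hsub : ∀ x ∈ X, x ∈ C) :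
    (X.card : ℝ≥0∞) ≤ wt r C := by
  classical
  rw [wt, tsum_subtype C (fun z => ((r z : ℝ≥0) : ℝ≥0∞))]
  have h2 : ∀ x ∈ X, (1:ℝ≥0∞) ≤ C.indicator (fun x => ((r x : ℝ≥0) : ℝ≥0∞)) x := by
    intro x hx
    rw [Set.indicator_of_mem (hsub x hx)]
    exact_mod_cast h1 x hx
  calc (X.card : ℝ≥0∞) = ∑ _x ∈ X, 1 := by simp
  _ ≤ ∑ x ∈ X, C.indicator (fun x => ((r x : ℝ≥0) : ℝ≥0∞)) x := Finset.sum_le_sum h2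
  _ ≤ _ := ENNReal.sum_le_tsum X

lemma forced_merge {r : ℕ → ℝ≥0} {α : ℝ} (hα : 1 ≤ α) {X Y : Finset ℕ}
    (hX : ForcedSet r α X) (hY : ForcedSet r α Y) {x0 y0 D : ℕ}
    (hx0 : x0 ∈ X) (hy0 : y0 ∈ Y) (hD1 : 1 ≤ D)
    (hdist : pathGraphN.dist x0 y0 ≤ D) (hDX : D ≤ X.card) (hDY : D ≤ Y.card) :
    ForcedSet r α (X ∪ Y) := by
  classical
  obtain ⟨hXne, hX1, hXf⟩ := hX
  obtain ⟨hYne, hY1, hYf⟩ := hY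
  refine ⟨hXne.mono Finset.subset_union_left, ?_, ?_⟩
  · intro x hx
    rcases Finset.mem_union.1 hx with h | h
    · exact hX1 x h
    · exact hY1 x h
  · intro s hs x hx y hy
    have key : s x0 y0 := by
      by_contra hne
      set C : Set ℕ := {u | s u x0} with hCdef
      set C' : Set ℕ := {u | s u y0} with hC'def
      have hC : C ∈ s.classes := s.mem_classes x0
      have hC' : C' ∈ s.classes := s.mem_classes y0
      have hx0C : x0 ∈ C := s.refl' x0
      have hy0C' : y0 ∈ C' := s.refl' y0
      have hCC' : C ≠ C' := by
        intro h
        apply hne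
        have : x0 ∈ C' := h ▸ hx0C
        exact this
      have hlt := hs C hC C' hC' hCC'
      have hsd : setDist pathGraphN C C' ≤ (D : ℝ≥0∞) := by
        refine le_trans (iInf₂_le (⟨x0, hx0C⟩ : C) (⟨y0, hy0C'⟩ : C')) ?_
        exact_mod_cast hdist
      have hXC : ∀ z ∈ X, z ∈ C := fun z hz => hXf s hs z hz x0 hx0
      have hYC' : ∀ z ∈ Y, z ∈ C' := fun z hz => hYf s hs z hz y0 hy0
      have hwX : (D : ℝ≥0∞) ≤ wt r C :=
        le_trans (by exact_mod_cast hDX) (card_le_wt hX1 hXC)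
      have hwY : (D : ℝ≥0∞) ≤ wt r C' :=
        le_trans (by exact_mod_cast hDY) (card_le_wt hY1 hYC')
      have hmin : (D : ℝ≥0∞) ≤ min (wt r C) (wt r C') := le_min hwX hwY
      have h1le : (1 : ℝ≥0∞) ≤ min (wt r C) (wt r C') :=
        le_trans (by exact_mod_cast hD1) hmin
      have hpow : min (wt r C) (wt r C') ≤ (min (wt r C) (wt r C')) ^ α := by
        calc min (wt r C) (wt r C') = (min (wt r C) (wt r C')) ^ (1:ℝ) :=
              (ENNReal.rpow_one _).symm
        _ ≤ _ := ENNReal.rpow_le_rpow_of_exponent_le h1le hα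
      exact absurd ((hmin.trans hpow).trans_lt (hlt.trans_le hsd)) (lt_irrefl _)
    rcases Finset.mem_union.1 hx with h | h <;> rcases Finset.mem_union.1 hy with h' | h'
    · exact hXf s hs x h y h'
    · exact s.trans' (hXf s hs x h x0 hx0) (s.trans' key (hYf s hs y0 hy0 y h'))
    · exact s.trans' (hYf s hs x h y0 hy0)
        (s.trans' (s.symm' key) (hXf s hs x0 hx0 y h'))
    · exact hYf s hs x h y h'

lemma forced_interval {r : ℕ → ℝ≥0} {α : ℝ} (hα : 1 ≤ α) {a n : ℕ} (hn : 1 ≤ n)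
    (h1 : ∀ x ∈ Finset.Ico a (a+n), 1 ≤ r x) :
    ForcedSet r α (Finset.Ico a (a+n)) := by
  induction n with
  | zero => omega
  | succ n ih =>
    rcases Nat.eq_or_lt_of_le hn with h | h
    · -- n+1 = 1
      have hn0 : n = 0 := by omega
      subst hn0
      refine ⟨⟨a, by simp⟩, h1, ?_⟩
      intro s _ x hx y hy
      have hx' : x = a := by simp at hx; omega
      have hy' : y = a := by simp at hy; omega
      subst hx'; subst hy'
      exact s.refl' _
    · have hn' : 1 ≤ n := by omega
      have h1' : ∀ x ∈ Finset.Ico a (a+n), 1 ≤ r x := by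
        intro x hx
        apply h1
        simp only [Finset.mem_Ico] at hx ⊢
        omega
      have hX := ih hn' h1'
      have hsing : ForcedSet r α {a+n} := by
        refine ⟨⟨a+n, by simp⟩, ?_, ?_⟩
        · intro x hx
          apply h1
          simp only [Finset.mem_singleton] at hx
          simp only [Finset.mem_Ico]
          omega
        · intro s _ x hx y hy
          simp only [Finset.mem_singleton] at hx hy
          subst hx; subst hy
          exact s.refl' _
      have hmerge := forced_merge hα hX hsing
        (x0 := a+n-1) (y0 := a+n) (D := 1)
        (by simp only [Finset.mem_Ico]; omega) (by simp) le_rfl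
        (path_dist_le (by omega) (by omega))
        (by rw [Nat.card_Ico]; omega) (by simp)
      have : Finset.Ico a (a+n) ∪ {a+n} = Finset.Ico a (a+(n+1)) := by
        ext x
        simp only [Finset.mem_union, Finset.mem_Ico, Finset.mem_singleton]
        omega
      rwa [this] at hmerge


-- ## Part 2 : scales, goodness, clusters, multiscale construction

def ex : ℕ → ℕ
  | 0 => 6
  | j+1 => (j+6) + ex j

def Lam (j : ℕ) : ℕ := 2 ^ ex j

lemma Lam_zero : Lam 0 = 64 := rfl

lemma Lam_succ (j : ℕ) : Lam (j+1) = 2^(j+6) * Lam j := by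
  rw [Lam, Lam, ex, pow_add]

lemma ex_ge (j : ℕ) : j + 6 ≤ ex j := by
  induction j with
  | zero => simp [ex]
  | succ j ih => rw [ex]; omega

lemma Lam_pos (j : ℕ) : 0 < Lam j := Nat.pow_pos (by norm_num)

lemma Lam_ge (j : ℕ) : 2^(j+6) ≤ Lam j := Nat.pow_le_pow_right (by norm_num) (ex_ge j)

lemma Lam_ge64 (j : ℕ) : 64 ≤ Lam j := le_trans (by
  have : (64:ℕ) = 2^6 := by norm_num
  rw [this]; exact Nat.pow_le_pow_right (by norm_num) (by omega)) (Lam_ge j)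

lemma eight_dvd_Lam (j : ℕ) : 8 ∣ Lam j := by
  have : (8:ℕ) = 2^3 := by norm_num
  rw [this, Lam]
  exact pow_dvd_pow 2 (by have := ex_ge j; omega)

/-- Recursive goodness of the level-`j` block with index `i`. -/
def Good (r : ℕ → ℝ≥0) : ℕ → ℕ → Prop
  | 0, i => ∀ x ∈ Finset.Ico (i * Lam 0) ((i+1) * Lam 0), 1 ≤ r x
  | j+1, i => ∀ t1 t2 : ℕ, t1 < t2 → t2 < 2^(j+6) →
      Good r j (i * 2^(j+6) + t1) ∨ Good r j (i * 2^(j+6) + t2)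

/-- A forced cluster certificate for a good block. -/
structure Cl (r : ℕ → ℝ≥0) (α : ℝ) (j i : ℕ) (X : Finset ℕ) : Prop where
  forced : ForcedSet r α X
  sub : ∀ x ∈ X, i * Lam j ≤ x ∧ x < (i+1) * Lam j
  big : (2^j + 1) * Lam j ≤ 2^(j+1) * X.card
  low : ∃ u ∈ X, 8*u < 8*(i*Lam j) + Lam j
  high : ∃ v ∈ X, 8*((i+1)*Lam j) ≤ 8*v + Lam j

lemma Cl.card_half {r : ℕ → ℝ≥0} {α : ℝ} {j i : ℕ} {X : Finset ℕ}
    (h : Cl r α j i X) : Lam j ≤ 2 * X.card := by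
  have hb := h.big
  have h2 : 2^j * Lam j ≤ 2^j * (2 * X.card) := by
    calc 2^j * Lam j ≤ (2^j + 1) * Lam j := by nlinarith [Lam_pos j]
    _ ≤ 2^(j+1) * X.card := hb
    _ = 2^j * (2 * X.card) := by ring
  exact Nat.le_of_mul_le_mul_left h2 (Nat.pow_pos (by norm_num))

/-- Chaining consecutive good blocks at level `j`, starting from a given cluster. -/
lemma chain {r : ℕ → ℝ≥0} {α : ℝ} (hα : 1 ≤ α) (j c : ℕ) :
    ∀ n, 1 ≤ n → ∀ K : Finset ℕ, Cl r α j c K →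
    (∀ t, 1 ≤ t → t < n → ∃ X, Cl r α j (c+t) X) →
    ∃ Y : Finset ℕ, K ⊆ Y ∧ ForcedSet r α Y ∧
      (∀ x ∈ Y, c * Lam j ≤ x ∧ x < (c+n) * Lam j) ∧
      n * ((2^j + 1) * Lam j) ≤ 2^(j+1) * Y.card ∧
      (∃ u ∈ Y, 8*u < 8*(c*Lam j) + Lam j) ∧
      (∃ v ∈ Y, 8*((c+n)*Lam j) ≤ 8*v + Lam j) := by
  intro n
  induction n with
  | zero => omega
  | succ n ih =>
    intro _ K hK hCl
    rcases Nat.eq_zero_or_pos n with hn0 | hn1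
    · subst hn0
      have he : c + (0+1) = c + 1 := by omega
      rw [he]
      refine ⟨K, le_refl _, hK.forced, ?_, ?_, hK.low, ?_⟩
      · intro x hx
        exact hK.sub x hx
      · simpa using hK.big
      · exact hK.high
    · obtain ⟨Y, hKY, hYf, hYsub, hYbig, hYlow, hYhigh⟩ :=
        ih hn1 K hK (fun t ht htn => hCl t ht (by omega))
      obtain ⟨X, hX⟩ := hCl n hn1 (by omega)
      obtain ⟨v, hvY, hv⟩ := hYhigh
      obtain ⟨u, huX, hu⟩ := hX.low
      have hsum1 : (c+(n+1)) * Lam j = (c+n) * Lam j + Lam j := by ring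
      have hsum2 : (c+n+1) * Lam j = (c+n) * Lam j + Lam j := by ring
      have hcc : c * Lam j ≤ (c+n) * Lam j := Nat.mul_le_mul_right _ (by omega)
      -- the quarter-scale distance
      obtain ⟨q, hq⟩ : ∃ q, Lam j = 8 * q := eight_dvd_Lam j
      have hq16 : 8 ≤ q := by have := Lam_ge64 j; omega
      have hvlt : v < (c+n) * Lam j := (hYsub v hvY).2
      have hule : (c+n) * Lam j ≤ u := by
        have := (hX.sub u huX).1
        omega
      have hYcard : Lam j ≤ 2 * Y.card := by
        have h2 : 2^j * Lam j ≤ 2^j * (2 * Y.card) := by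
          calc 2^j * Lam j ≤ (2^j + 1) * Lam j := Nat.mul_le_mul_right _ (by omega)
          _ = 1 * ((2^j + 1) * Lam j) := by ring
          _ ≤ n * ((2^j + 1) * Lam j) := Nat.mul_le_mul_right _ hn1
          _ ≤ 2^(j+1) * Y.card := hYbig
          _ = 2^j * (2 * Y.card) := by ring
        exact Nat.le_of_mul_le_mul_left h2 (Nat.pow_pos (by norm_num))
      have hXcard : Lam j ≤ 2 * X.card := hX.card_half
      have hdist : pathGraphN.dist v u ≤ 2*q :=
        path_dist_le (by omega) (by omega)
      have hmerge := forced_merge hα hYf hX.forced hvY huX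
        (D := 2*q) (by omega) hdist (by omega) (by omega)
      refine ⟨Y ∪ X, le_trans hKY Finset.subset_union_left, hmerge, ?_, ?_, ?_, ?_⟩
      · intro x hx
        rcases Finset.mem_union.1 hx with h | h
        · have := hYsub x h; omega
        · have := hX.sub x h
          omega
      · have hdisj : Disjoint Y X := by
          rw [Finset.disjoint_left]
          intro x hxY hxX
          have := (hYsub x hxY).2
          have := (hX.sub x hxX).1
          omega
        rw [Finset.card_union_of_disjoint hdisj]
        have := hX.big
        calc (n+1) * ((2^j + 1) * Lam j)
            = n * ((2^j + 1) * Lam j) + (2^j+1) * Lam j := by ring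
        _ ≤ 2^(j+1) * Y.card + 2^(j+1) * X.card := Nat.add_le_add hYbig hX.big
        _ = 2^(j+1) * (Y.card + X.card) := by ring
      · obtain ⟨u0, hu0, hu0'⟩ := hYlow
        exact ⟨u0, Finset.mem_union_left _ hu0, hu0'⟩
      · obtain ⟨v0, hv0, hv0'⟩ := hX.high
        refine ⟨v0, Finset.mem_union_right _ hv0, ?_⟩
        have h1 : (c+(n+1)) * Lam j = (c+n+1) * Lam j := by ring
        rw [h1]
        exact hv0'

-- ## Part 3 : block-level construction

lemma pow_j6 (j : ℕ) : 2^(j+6) = 64 * 2^j := by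
  rw [pow_add]; ring

lemma promote {r : ℕ → ℝ≥0} {α : ℝ} {j i : ℕ} {Y : Finset ℕ}
    (hf : ForcedSet r α Y)
    (hsub : ∀ x ∈ Y, i * Lam (j+1) ≤ x ∧ x < (i+1) * Lam (j+1))
    (n' : ℕ) (hn' : 2^(j+6) ≤ n' + 3)
    (hbig : n' * ((2^j + 1) * Lam j) ≤ 2^(j+1) * Y.card)
    (hlow : ∃ u ∈ Y, 8*u < 8*(i*Lam (j+1)) + 25 * Lam j)
    (hhigh : ∃ v ∈ Y, 8*((i+1)*Lam (j+1)) ≤ 8*v + 25 * Lam j) :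
    Cl r α (j+1) i Y := by
  have hL := Lam_pos j
  have ha : 1 ≤ 2^j := Nat.one_le_two_pow
  have hLam' : Lam (j+1) = 64 * 2^j * Lam j := by rw [Lam_succ, pow_j6]
  refine ⟨hf, hsub, ?_, ?_, ?_⟩
  · -- big
    have key : (2^(j+1) + 1) * Lam (j+1) ≤ 2 * (n' * ((2^j + 1) * Lam j)) := by
      rw [hLam']
      have h1 : 2^(j+1) = 2 * 2^j := by rw [pow_succ]; ring
      rw [h1]
      have h64 : 64 * 2^j ≤ n' + 3 := by rw [← pow_j6]; exact hn'
      nlinarith [hL, ha, h64]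
    calc (2^(j+1) + 1) * Lam (j+1) ≤ 2 * (n' * ((2^j + 1) * Lam j)) := key
    _ ≤ 2 * (2^(j+1) * Y.card) := by omega
    _ = 2^(j+1+1) * Y.card := by rw [pow_succ]; ring
  · obtain ⟨u, hu, hu'⟩ := hlow
    refine ⟨u, hu, ?_⟩
    have : 25 * Lam j ≤ Lam (j+1) := by
      rw [hLam']; nlinarith [hL, ha]
    omega
  · obtain ⟨v, hv, hv'⟩ := hhigh
    refine ⟨v, hv, ?_⟩
    have : 25 * Lam j ≤ Lam (j+1) := by
      rw [hLam']; nlinarith [hL, ha]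
    omega

lemma tail_chain {r : ℕ → ℝ≥0} {α : ℝ} (hα : 1 ≤ α) {j i s b : ℕ} {K : Finset ℕ}
    (ihc : ∀ i', Good r j i' → ∃ X, Cl r α j i' X)
    (hs : s ≤ 3) (hsb : s < b) (hb3 : 3 ≤ b) (hs0 : s = 0 ∨ 2^(j+6) ≤ b)
    (hK : Cl r α j (i * 2^(j+6) + s) K)
    (hgoods : ∀ t, s < t → t < 2^(j+6) → t ≠ b → Good r j (i * 2^(j+6) + t)) :
    ∃ X, Cl r α (j+1) i X ∧ K ⊆ X := by
  have hL := Lam_pos j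
  have ha : 1 ≤ 2^j := Nat.one_le_two_pow
  have hm64 : 64 ≤ 2^(j+6) := by rw [pow_j6]; omega
  set m := 2^(j+6) with hmdef
  have hLam' : Lam (j+1) = m * Lam j := Lam_succ j
  have hiLam : (i * m) * Lam j = i * Lam (j+1) := by rw [hLam']; ring
  have hiLam1 : (i * m + m) * Lam j = (i+1) * Lam (j+1) := by rw [hLam']; ring
  rcases le_or_gt m b with hmb | hbm
  · -- case A : no bad child in [s, m)
    obtain ⟨Y, hKY, hYf, hYsub, hYbig, hYlow, hYhigh⟩ :=
      chain hα j (i*m + s) (m - s) (by omega) K hK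
        (fun t ht htn => ihc _ (by
          have := hgoods (s+t) (by omega) (by omega) (by omega)
          have he : i * m + s + t = i * m + (s + t) := by omega
          rwa [he]))
    have hcn : i * m + s + (m - s) = i * m + m := by omega
    refine ⟨Y, promote hYf ?_ (m - s) (by omega) hYbig ?_ ?_, hKY⟩
    · intro x hx
      have h1 := hYsub x hx
      rw [hcn, hiLam1] at h1
      have h2 : i * Lam (j+1) ≤ (i*m+s) * Lam j := by
        rw [← hiLam]
        exact Nat.mul_le_mul_right _ (by omega)
      omega
    · obtain ⟨u, hu, hu'⟩ := hYlow
      refine ⟨u, hu, ?_⟩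
      have h2 : (i*m+s) * Lam j = i * Lam (j+1) + s * Lam j := by
        rw [← hiLam]; ring
      have h3 : s * Lam j ≤ 3 * Lam j := Nat.mul_le_mul_right _ hs
      omega
    · obtain ⟨v, hv, hv'⟩ := hYhigh
      rw [hcn, hiLam1] at hv'
      exact ⟨v, hv, by omega⟩
  · -- bad child at b < m ; hence s = 0
    have hs0' : s = 0 := by
      rcases hs0 with h | h
      · exact h
      · omega
    subst hs0'
    simp only [Nat.add_zero] at hK
    rcases le_or_gt (b+4) m with hb4 | hb4
    · -- case B : merge the two chains on either side of b
      obtain ⟨Yl, hKYl, hYlf, hYlsub, hYlbig, hYllow, hYlhigh⟩ :=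
        chain hα j (i*m) b (by omega) K hK
          (fun t ht htn => ihc _ (hgoods t (by omega) (by omega) (by omega)))
      obtain ⟨K', hK'⟩ := ihc (i*m + (b+1)) (hgoods (b+1) (by omega) (by omega) (by omega))
      obtain ⟨Yr, hKYr, hYrf, hYrsub, hYrbig, hYrlow, hYrhigh⟩ :=
        chain hα j (i*m + (b+1)) (m - b - 1) (by omega) K' hK'
          (fun t ht htn => ihc _ (by
            have := hgoods (b+1+t) (by omega) (by omega) (by omega)
            have he : i * m + (b+1) + t = i * m + (b+1+t) := by omega
            rwa [he]))
      -- merge Yl and Yr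
      obtain ⟨v, hvY, hv⟩ := hYlhigh
      obtain ⟨u, huX, hu⟩ := hYrlow
      obtain ⟨q, hq⟩ : ∃ q, Lam j = 8 * q := eight_dvd_Lam j
      have hq16 : 8 ≤ q := by have := Lam_ge64 j; omega
      have hvlt : v < (i*m + b) * Lam j := (hYlsub v hvY).2
      have hule : (i*m + (b+1)) * Lam j ≤ u := (hYrsub u huX).1
      have hble : (i*m + (b+1)) * Lam j = (i*m+b) * Lam j + Lam j := by ring
      have hcardl : 12*q ≤ Yl.card := by
        have h1 : 2^(j+1) * (12*q) ≤ 2^(j+1) * Yl.card := by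
          calc 2^(j+1) * (12*q) = 3 * (2^j * Lam j) := by
                rw [hq, pow_succ]; ring
          _ ≤ 3 * ((2^j + 1) * Lam j) := by
                have : 2^j * Lam j ≤ (2^j+1) * Lam j := Nat.mul_le_mul_right _ (by omega)
                omega
          _ ≤ b * ((2^j + 1) * Lam j) := Nat.mul_le_mul_right _ hb3
          _ ≤ 2^(j+1) * Yl.card := hYlbig
        exact Nat.le_of_mul_le_mul_left h1 (Nat.pow_pos (by norm_num))
      have hcardr : 12*q ≤ Yr.card := by
        have h1 : 2^(j+1) * (12*q) ≤ 2^(j+1) * Yr.card := by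
          calc 2^(j+1) * (12*q) = 3 * (2^j * Lam j) := by
                rw [hq, pow_succ]; ring
          _ ≤ 3 * ((2^j + 1) * Lam j) := by
                have : 2^j * Lam j ≤ (2^j+1) * Lam j := Nat.mul_le_mul_right _ (by omega)
                omega
          _ ≤ (m - b - 1) * ((2^j + 1) * Lam j) := Nat.mul_le_mul_right _ (by omega)
          _ ≤ 2^(j+1) * Yr.card := hYrbig
        exact Nat.le_of_mul_le_mul_left h1 (Nat.pow_pos (by norm_num))
      have hdist : pathGraphN.dist v u ≤ 12*q := path_dist_le (by omega) (by omega)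
      have hmerge := forced_merge hα hYlf hYrf hvY huX
        (D := 12*q) (by omega) hdist hcardl hcardr
      have hdisj : Disjoint Yl Yr := by
        rw [Finset.disjoint_left]
        intro x hxY hxX
        have h1 := (hYlsub x hxY).2
        have h2 := (hYrsub x hxX).1
        omega
      refine ⟨Yl ∪ Yr, promote hmerge ?_ (m-1) (by omega) ?_ ?_ ?_,
        le_trans hKYl Finset.subset_union_left⟩
      · intro x hx
        rcases Finset.mem_union.1 hx with h | h
        · have h1 := hYlsub x h
          rw [hiLam] at h1
          have h2 : (i*m+b) * Lam j ≤ (i+1) * Lam (j+1) := by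
            rw [← hiLam1]
            exact Nat.mul_le_mul_right _ (by omega)
          omega
        · have h1 := hYrsub x h
          have hcn : i * m + (b+1) + (m - b - 1) = i*m + m := by omega
          rw [hcn, hiLam1] at h1
          have h2 : i * Lam (j+1) ≤ (i*m+(b+1)) * Lam j := by
            rw [← hiLam]
            exact Nat.mul_le_mul_right _ (by omega)
          omega
      · rw [Finset.card_union_of_disjoint hdisj]
        calc (m-1) * ((2^j + 1) * Lam j)
            = b * ((2^j + 1) * Lam j) + (m - b - 1) * ((2^j+1) * Lam j) := by
              rw [← Nat.add_mul]
              congr 1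
              omega
        _ ≤ 2^(j+1) * Yl.card + 2^(j+1) * Yr.card := Nat.add_le_add hYlbig hYrbig
        _ = 2^(j+1) * (Yl.card + Yr.card) := by ring
      · obtain ⟨u0, hu0, hu0'⟩ := hYllow
        rw [hiLam] at hu0'
        exact ⟨u0, Finset.mem_union_left _ hu0, by omega⟩
      · obtain ⟨v0, hv0, hv0'⟩ := hYrhigh
        have hcn : i * m + (b+1) + (m - b - 1) = i*m + m := by omega
        rw [hcn, hiLam1] at hv0'
        exact ⟨v0, Finset.mem_union_right _ hv0, by omega⟩
    · -- case C : bad child close to the right end, use only the left chain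
      obtain ⟨Y, hKY, hYf, hYsub, hYbig, hYlow, hYhigh⟩ :=
        chain hα j (i*m) b (by omega) K hK
          (fun t ht htn => ihc _ (hgoods t (by omega) (by omega) (by omega)))
      refine ⟨Y, promote hYf ?_ b (by omega) hYbig ?_ ?_, hKY⟩
      · intro x hx
        have h1 := hYsub x hx
        rw [hiLam] at h1
        have h2 : (i*m+b) * Lam j ≤ (i+1) * Lam (j+1) := by
          rw [← hiLam1]
          exact Nat.mul_le_mul_right _ (by omega)
        omega
      · obtain ⟨u, hu, hu'⟩ := hYlow
        rw [hiLam] at hu'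
        exact ⟨u, hu, by omega⟩
      · obtain ⟨v, hv, hv'⟩ := hYhigh
        refine ⟨v, hv, ?_⟩
        have h2 : (i+1) * Lam (j+1) = (i*m+b) * Lam j + (m - b) * Lam j := by
          rw [← hiLam1, ← Nat.add_mul]
          congr 1
          omega
        have h3 : (m - b) * Lam j ≤ 3 * Lam j := Nat.mul_le_mul_right _ (by omega)
        omega

-- ## Part 4 : every good block carries a forced cluster; the spine

lemma good_cluster {r : ℕ → ℝ≥0} {α : ℝ} (hα : 1 ≤ α) :
    ∀ j i, Good r j i → ∃ X, Cl r α j i X := by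
  intro j
  induction j with
  | zero =>
    intro i hg
    have hL : Lam 0 = 64 := rfl
    have he : (i+1) * Lam 0 = i * Lam 0 + Lam 0 := by ring
    have hforced : ForcedSet r α (Finset.Ico (i * Lam 0) ((i+1) * Lam 0)) := by
      rw [he]
      exact forced_interval hα (by omega) (fun x hx => hg x (by rw [he]; exact hx))
    refine ⟨_, hforced, ?_, ?_, ?_, ?_⟩
    · intro x hx
      simpa [Finset.mem_Ico] using hx
    · rw [Nat.card_Ico]
      omega
    · exact ⟨i * Lam 0, by simp [Finset.mem_Ico]; omega, by omega⟩
    · refine ⟨(i+1) * Lam 0 - 1, by simp [Finset.mem_Ico]; omega, by omega⟩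
  | succ j ih =>
    intro i hg
    have hg' : ∀ t1 t2 : ℕ, t1 < t2 → t2 < 2^(j+6) →
        Good r j (i * 2^(j+6) + t1) ∨ Good r j (i * 2^(j+6) + t2) := hg
    have hm64 : 64 ≤ 2^(j+6) := by rw [pow_j6]; have := Nat.one_le_two_pow (n := j); omega
    by_cases hbad : ∃ b, b < 2^(j+6) ∧ ¬ Good r j (i * 2^(j+6) + b)
    · obtain ⟨b, hbm, hbbad⟩ := hbad
      have hother : ∀ t, t < 2^(j+6) → t ≠ b → Good r j (i * 2^(j+6) + t) := by
        intro t htm htb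
        rcases Nat.lt_or_ge t b with h | h
        · rcases hg' t b h hbm with hgood | hgood
          · exact hgood
          · exact absurd hgood hbbad
        · have h' : b < t := by omega
          rcases hg' b t h' htm with hgood | hgood
          · exact absurd hgood hbbad
          · exact hgood
      rcases le_or_gt b 2 with hb2 | hb2
      · -- bad child among the first three : start from child b+1
        obtain ⟨K, hK⟩ := ih _ (hother (b+1) (by omega) (by omega))
        obtain ⟨X, hX, _⟩ := tail_chain hα (b := 2^(j+6)) (s := b+1)
          (fun i' h => ih i' h) (by omega) (by omega) (by omega) (Or.inr le_rfl)
          hK (fun t ht htm htb => hother t htm (by omega))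
        exact ⟨X, hX⟩
      · -- bad child later on : start from child 0
        obtain ⟨K, hK⟩ := ih _ (hother 0 (by omega) (by omega))
        have hK0 : Cl r α j (i * 2^(j+6) + 0) K := by rwa [Nat.add_zero]
        obtain ⟨X, hX, _⟩ := tail_chain hα (b := b) (s := 0)
          (fun i' h => ih i' h) (by omega) (by omega) (by omega) (Or.inl rfl)
          hK0 (fun t ht htm htb => hother t htm htb)
        exact ⟨X, hX⟩
    · push_neg at hbad
      obtain ⟨K, hK⟩ := ih _ (hbad 0 (by omega))
      have hK0 : Cl r α j (i * 2^(j+6) + 0) K := by rwa [Nat.add_zero]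
      obtain ⟨X, hX, _⟩ := tail_chain hα (b := 2^(j+6)) (s := 0)
        (fun i' h => ih i' h) (by omega) (by omega) (by omega) (Or.inl rfl)
        hK0 (fun t ht htm htb => hbad t htm)
      exact ⟨X, hX⟩

lemma spine_step {r : ℕ → ℝ≥0} {α : ℝ} (hα : 1 ≤ α) {j : ℕ} {K : Finset ℕ}
    (hK : Cl r α j 0 K) (hg : Good r (j+1) 0)
    (h1 : Good r j 1) (h2 : Good r j 2) :
    ∃ X, Cl r α (j+1) 0 X ∧ K ⊆ X := by
  have hg' : ∀ t1 t2 : ℕ, t1 < t2 → t2 < 2^(j+6) →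
      Good r j (0 * 2^(j+6) + t1) ∨ Good r j (0 * 2^(j+6) + t2) := hg
  simp only [Nat.zero_mul, Nat.zero_add] at hg'
  have hm64 : 64 ≤ 2^(j+6) := by rw [pow_j6]; have := Nat.one_le_two_pow (n := j); omega
  have hK0 : Cl r α j (0 * 2^(j+6) + 0) K := by
    rwa [Nat.zero_mul, Nat.zero_add]
  by_cases hbad : ∃ b, b < 2^(j+6) ∧ ¬ Good r j b
  · obtain ⟨b, hbm, hbbad⟩ := hbad
    have hother : ∀ t, t < 2^(j+6) → t ≠ b → Good r j t := by
      intro t htm htb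
      rcases Nat.lt_or_ge t b with h | h
      · rcases hg' t b h hbm with hgood | hgood
        · exact hgood
        · exact absurd hgood hbbad
      · have h' : b < t := by omega
        rcases hg' b t h' htm with hgood | hgood
        · exact absurd hgood hbbad
        · exact hgood
    have hb1 : b ≠ 1 := fun h => hbbad (h ▸ h1)
    have hb2 : b ≠ 2 := fun h => hbbad (h ▸ h2)
    rcases Nat.eq_zero_or_pos b with hb0 | hb0
    · -- the bad child is child 0 itself: all the others are good
      subst hb0
      obtain ⟨X, hX, hKX⟩ := tail_chain hα (i := 0) (b := 2^(j+6)) (s := 0)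
        (fun i' h => good_cluster hα j i' h) (by omega) (by omega) (by omega) (Or.inl rfl)
        hK0 (fun t ht htm htb => by simpa using hother t htm (by omega))
      exact ⟨X, hX, hKX⟩
    · have hb3 : 3 ≤ b := by omega
      obtain ⟨X, hX, hKX⟩ := tail_chain hα (i := 0) (b := b) (s := 0)
        (fun i' h => good_cluster hα j i' h) (by omega) (by omega) (by omega) (Or.inl rfl)
        hK0 (fun t ht htm htb => by simpa using hother t htm htb)
      exact ⟨X, hX, hKX⟩
  · push_neg at hbad
    obtain ⟨X, hX, hKX⟩ := tail_chain hα (i := 0) (b := 2^(j+6)) (s := 0)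
      (fun i' h => good_cluster hα j i' h) (by omega) (by omega) (by omega) (Or.inl rfl)
      hK0 (fun t ht htm htb => by simpa using hbad t htm)
    exact ⟨X, hX, hKX⟩

-- ## Part 5 : the spine and the deterministic criterion

lemma spine {r : ℕ → ℝ≥0} {α : ℝ} (hα : 1 ≤ α) (h0 : Good r 0 0)
    (hs : ∀ j, Good r (j+1) 0 ∧ Good r j 1 ∧ Good r j 2) :
    ∃ X : ℕ → Finset ℕ, (∀ j, Cl r α j 0 (X j)) ∧ ∀ j, X j ⊆ X (j+1) := by
  obtain ⟨X0, hX0⟩ := good_cluster hα 0 0 h0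
  have step : ∀ j (K : Finset ℕ), Cl r α j 0 K → ∃ X', Cl r α (j+1) 0 X' ∧ K ⊆ X' :=
    fun j K hK => spine_step hα hK (hs j).1 (hs j).2.1 (hs j).2.2
  choose f hf1 hf2 using step
  let g : ∀ j : ℕ, {X : Finset ℕ // Cl r α j 0 X} := fun j =>
    Nat.rec (motive := fun j => {X : Finset ℕ // Cl r α j 0 X})
      ⟨X0, hX0⟩ (fun j p => ⟨f j p.1 p.2, hf1 j p.1 p.2⟩) j
  exact ⟨fun j => (g j).1, fun j => (g j).2, fun j => hf2 j (g j).1 (g j).2⟩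

theorem determ {r : ℕ → ℝ≥0} {α : ℝ} (hα : 1 ≤ α) (h0 : Good r 0 0)
    (hs : ∀ j, Good r (j+1) 0 ∧ Good r j 1 ∧ Good r j 2) :
    HasInfiniteCluster pathGraphN r α := by
  obtain ⟨X, hCl, hmono⟩ := spine hα h0 hs
  obtain ⟨z0, hz0⟩ := (hCl 0).forced.1
  have hz : ∀ j, z0 ∈ X j := by
    intro j
    induction j with
    | zero => exact hz0
    | succ j ih => exact hmono j ih
  refine ⟨{x | (CMP pathGraphN r α) x z0}, (CMP pathGraphN r α).mem_classes z0, ?_⟩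
  have hsub : ∀ j, ∀ y ∈ X j, (CMP pathGraphN r α) y z0 := by
    intro j y hy
    exact Setoid.sInf_iff.mpr
      (fun s hsadm => (hCl j).forced.2.2 s hsadm y hy z0 (hz j))
  have hcard : ∀ j, j + 1 ≤ (X j).card := by
    intro j
    have hbig := (hCl j).big
    have h1 : 2^(j+1) * (j+1) ≤ 2^(j+1) * (X j).card := by
      calc 2^(j+1) * (j+1) ≤ 2^(j+1) * 2^(j+5) := by
            have h2 : j < 2^j := Nat.lt_two_pow_self
            have h3 : 2^j ≤ 2^(j+5) := Nat.pow_le_pow_right (by norm_num) (by omega)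
            exact Nat.mul_le_mul_left _ (by omega)
      _ = 2^j * 2^(j+6) := by rw [← pow_add, ← pow_add]; congr 1; omega
      _ ≤ 2^j * Lam j := Nat.mul_le_mul_left _ (Lam_ge j)
      _ ≤ (2^j + 1) * Lam j := Nat.mul_le_mul_right _ (by omega)
      _ ≤ 2^(j+1) * (X j).card := hbig
    exact Nat.le_of_mul_le_mul_left h1 (Nat.pow_pos (by norm_num))
  intro hfin
  have hsubt : X hfin.toFinset.card ⊆ hfin.toFinset := by
    intro x hx
    rw [Set.Finite.mem_toFinset]
    exact hsub _ x hx
  have h1 := Finset.card_le_card hsubt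
  have h2 := hcard hfin.toFinset.card
  omega

-- ## Part 6 : locality and measurability of goodness

lemma good_congr : ∀ (j i : ℕ) {r r' : ℕ → ℝ≥0},
    (∀ x, i * Lam j ≤ x → x < (i+1) * Lam j → r x = r' x) →
    Good r j i → Good r' j i := by
  intro j
  induction j with
  | zero =>
    intro i r r' h hg x hx
    rw [Finset.mem_Ico] at hx
    have := hg x (by rw [Finset.mem_Ico]; exact hx)
    rwa [h x hx.1 hx.2] at this
  | succ j ih =>
    intro i r r' h hg t1 t2 h12 h2m
    have hsub : ∀ t, t < 2^(j+6) → ∀ x, (i * 2^(j+6) + t) * Lam j ≤ x →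
        x < (i * 2^(j+6) + t + 1) * Lam j → r x = r' x := by
      intro t htm x hx1 hx2
      apply h
      · calc i * Lam (j+1) = (i * 2^(j+6)) * Lam j := by rw [Lam_succ]; ring
        _ ≤ (i * 2^(j+6) + t) * Lam j := Nat.mul_le_mul_right _ (by omega)
        _ ≤ x := hx1
      · calc x < (i * 2^(j+6) + t + 1) * Lam j := hx2
        _ ≤ (i * 2^(j+6) + 2^(j+6)) * Lam j := Nat.mul_le_mul_right _ (by omega)
        _ = (i+1) * Lam (j+1) := by rw [Lam_succ]; ring
    rcases hg t1 t2 h12 h2m with hgood | hgood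
    · exact Or.inl (ih _ (hsub t1 (by omega)) hgood)
    · exact Or.inr (ih _ (hsub t2 h2m) hgood)

lemma good_measurable : ∀ (j i : ℕ), MeasurableSet {f : ℕ → ℝ≥0 | Good f j i} := by
  intro j
  induction j with
  | zero =>
    intro i
    have he : {f : ℕ → ℝ≥0 | Good f 0 i} =
        ⋂ x ∈ Finset.Ico (i * Lam 0) ((i+1) * Lam 0), {f : ℕ → ℝ≥0 | 1 ≤ f x} := by
      ext f
      simp only [Set.mem_setOf_eq, Set.mem_iInter]
      exact ⟨fun h x hx => h x hx, fun h x hx => h x hx⟩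
    rw [he]
    exact MeasurableSet.biInter (Finset.Ico _ _).countable_toSet
      (fun x _ => measurableSet_le measurable_const (measurable_pi_apply x))
  | succ j ih =>
    intro i
    have he : {f : ℕ → ℝ≥0 | Good f (j+1) i} =
        ⋂ t2 ∈ Finset.range (2^(j+6)), ⋂ t1 ∈ Finset.range t2,
          ({f : ℕ → ℝ≥0 | Good f j (i * 2^(j+6) + t1)} ∪
           {f : ℕ → ℝ≥0 | Good f j (i * 2^(j+6) + t2)}) := by
      ext f
      simp only [Set.mem_setOf_eq, Set.mem_iInter, Set.mem_union, Finset.mem_range]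
      exact ⟨fun h t2 ht2 t1 ht1 => h t1 t2 ht1 ht2, fun h t1 t2 h12 h2m => h t2 h2m t1 h12⟩
    rw [he]
    exact MeasurableSet.biInter (Finset.range _).countable_toSet (fun t2 _ =>
      MeasurableSet.biInter (Finset.range _).countable_toSet (fun t1 _ =>
        (ih _).union (ih _)))

/-- Extension of a partial configuration by zero. -/
noncomputable def extFn (S : Finset ℕ) (f : ↥S → ℝ≥0) : ℕ → ℝ≥0 :=
  fun x => if h : x ∈ S then f ⟨x, h⟩ else 0

lemma extFn_measurable (S : Finset ℕ) : Measurable (extFn S) := by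
  apply measurable_pi_lambda
  intro x
  by_cases h : x ∈ S
  · simp only [extFn, dif_pos h]
    exact measurable_pi_apply _
  · simp only [extFn, dif_neg h]
    exact measurable_const

lemma extFn_good_iff {j i : ℕ} (f : ℕ → ℝ≥0) :
    Good (extFn (Finset.Ico (i * Lam j) ((i+1) * Lam j)) (fun x => f x.1)) j i ↔
      Good f j i := by
  constructor
  · apply good_congr
    intro x h1 h2
    simp only [extFn, dif_pos (Finset.mem_Ico.mpr ⟨h1, h2⟩)]
  · apply good_congr
    intro x h1 h2
    simp only [extFn, dif_pos (Finset.mem_Ico.mpr ⟨h1, h2⟩)]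

section Prob

variable {Ω : Type} [MeasurableSpace Ω] {μ : Measure Ω} {w : Ω → ℕ → ℝ≥0} {p : ℝ}

lemma good_meas (hmeas : ∀ x, Measurable fun ω => w ω x) (j i : ℕ) :
    MeasurableSet {ω | Good (w ω) j i} := by
  have hw : Measurable (fun ω x => w ω x) := measurable_pi_lambda _ hmeas
  exact hw (good_measurable j i)

lemma site_bad [IsProbabilityMeasure μ] (hB : IsBernoulliField μ p w) (x : ℕ) :
    μ {ω | ¬ 1 ≤ w ω x} = 1 - ENNReal.ofReal p := by
  have he : {ω | ¬ 1 ≤ w ω x} = {ω | w ω x = 1}ᶜ := by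
    ext ω
    simp only [Set.mem_setOf_eq, Set.mem_compl_iff]
    rcases hB.2.1 ω x with h | h <;> rw [h] <;> norm_num
  have hms : MeasurableSet {ω | w ω x = 1} := (hB.1 x) (measurableSet_singleton 1)
  rw [he, prob_compl_eq_one_sub hms, hB.2.2.1 x]

lemma bad_indep (hB : IsBernoulliField μ p w) {j i1 i2 : ℕ} (h12 : i1 ≠ i2) :
    μ ({ω | ¬ Good (w ω) j i1} ∩ {ω | ¬ Good (w ω) j i2})
      = μ {ω | ¬ Good (w ω) j i1} * μ {ω | ¬ Good (w ω) j i2} := by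
  classical
  set S := Finset.Ico (i1 * Lam j) ((i1+1) * Lam j) with hS
  set T := Finset.Ico (i2 * Lam j) ((i2+1) * Lam j) with hT
  have hST : Disjoint S T := by
    rw [Finset.disjoint_left]
    intro x hx hx'
    rw [hS, Finset.mem_Ico] at hx
    rw [hT, Finset.mem_Ico] at hx'
    rcases Nat.lt_or_ge i1 i2 with h | h
    · have : (i1+1) * Lam j ≤ i2 * Lam j := Nat.mul_le_mul_right _ (by omega)
      omega
    · have h' : i2 < i1 := by omega
      have : (i2+1) * Lam j ≤ i1 * Lam j := Nat.mul_le_mul_right _ (by omega)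
      omega
  have hind := hB.2.2.2.indepFun_finset S T hST (fun x => hB.1 x)
  have h1 : {ω | ¬ Good (w ω) j i1}
      = (fun ω (x : ↥S) => w ω x.1) ⁻¹' (extFn S ⁻¹' {f | Good f j i1}ᶜ) := by
    ext ω
    simp only [Set.mem_setOf_eq, Set.mem_preimage, Set.mem_compl_iff]
    exact not_congr (extFn_good_iff (w ω)).symm
  have h2 : {ω | ¬ Good (w ω) j i2}
      = (fun ω (x : ↥T) => w ω x.1) ⁻¹' (extFn T ⁻¹' {f | Good f j i2}ᶜ) := by
    ext ω
    simp only [Set.mem_setOf_eq, Set.mem_preimage, Set.mem_compl_iff]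
    exact not_congr (extFn_good_iff (w ω)).symm
  rw [h1, h2]
  exact hind.measure_inter_preimage_eq_mul _ _
    ((extFn_measurable S) (good_measurable j i1).compl)
    ((extFn_measurable T) (good_measurable j i2).compl)

def bexp (j : ℕ) : ℕ := 40 * 2^j + 2*j + 18

lemma theta_anti {a b : ℕ} (h : b ≤ a) : (2⁻¹ : ℝ≥0∞)^a ≤ (2⁻¹)^b := by
  obtain ⟨c, rfl⟩ : ∃ c, a = b + c := ⟨a - b, by omega⟩
  rw [pow_add]
  calc (2⁻¹:ℝ≥0∞)^b * (2⁻¹)^c ≤ (2⁻¹)^b * 1 := by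
        gcongr
        exact pow_le_one' (by simp) _
  _ = (2⁻¹)^b := mul_one _

lemma two_pow_cancel (k : ℕ) : (2:ℝ≥0∞)^k * (2⁻¹)^k = 1 := by
  rw [← ENNReal.inv_pow]
  exact ENNReal.mul_inv_cancel (by positivity) (by simp)

lemma bad_bound [IsProbabilityMeasure μ] (hp : p = 1 - (2⁻¹:ℝ)^70)
    (hB : IsBernoulliField μ p w) :
    ∀ j i, μ {ω | ¬ Good (w ω) j i} ≤ (2⁻¹ : ℝ≥0∞) ^ bexp j := by
  have hq : (1:ℝ≥0∞) - ENNReal.ofReal p = (2⁻¹:ℝ≥0∞)^70 := by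
    have h0 : (0:ℝ) ≤ (2⁻¹:ℝ)^70 := by positivity
    have h1 : ((2⁻¹:ℝ)^70) ≤ 1 := by
      apply pow_le_one₀ <;> norm_num
    have hsum : ENNReal.ofReal p + ENNReal.ofReal ((2⁻¹:ℝ)^70) = 1 := by
      rw [hp, ← ENNReal.ofReal_add (by linarith) h0]
      norm_num
    have hhalf : ENNReal.ofReal ((2⁻¹:ℝ)^70) = (2⁻¹:ℝ≥0∞)^70 := by
      rw [ENNReal.ofReal_pow (by norm_num)]
      congr 1
      rw [ENNReal.ofReal_inv_of_pos (by norm_num : (0:ℝ) < 2)]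
      norm_num
    rw [← hsum, hhalf, ENNReal.add_sub_cancel_left ENNReal.ofReal_ne_top]
  intro j
  induction j with
  | zero =>
    intro i
    have hsub : {ω | ¬ Good (w ω) 0 i} ⊆
        ⋃ x ∈ Finset.Ico (i * Lam 0) ((i+1) * Lam 0), {ω | ¬ 1 ≤ w ω x} := by
      intro ω hω
      simp only [Set.mem_setOf_eq] at hω
      rw [Set.mem_iUnion₂]
      by_contra hc
      push_neg at hc
      apply hω
      intro x hx
      exact not_lt.mp (hc x hx)
    have hcard : (Finset.Ico (i * Lam 0) ((i+1) * Lam 0)).card = 64 := by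
      rw [Nat.card_Ico]
      have : (i+1) * Lam 0 = i * Lam 0 + Lam 0 := by ring
      rw [this]
      simp [Lam_zero]
    calc μ {ω | ¬ Good (w ω) 0 i}
        ≤ ∑ x ∈ Finset.Ico (i * Lam 0) ((i+1) * Lam 0), μ {ω | ¬ 1 ≤ w ω x} :=
          le_trans (measure_mono hsub) (measure_biUnion_finset_le _ _)
    _ = ∑ _x ∈ Finset.Ico (i * Lam 0) ((i+1) * Lam 0), (2⁻¹:ℝ≥0∞)^70 := by
          apply Finset.sum_congr rfl
          intro x _
          rw [site_bad hB x, hq]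
    _ = 64 * (2⁻¹:ℝ≥0∞)^70 := by
          rw [Finset.sum_const, hcard, nsmul_eq_mul]
          norm_num
    _ = (2⁻¹:ℝ≥0∞)^64 := by
          have h64 : (64:ℝ≥0∞) = 2^6 := by norm_num
          rw [h64, show (70:ℕ) = 6 + 64 from rfl, pow_add, ← mul_assoc,
            two_pow_cancel, one_mul]
    _ ≤ (2⁻¹:ℝ≥0∞)^(bexp 0) := theta_anti (by norm_num [bexp])
  | succ j ih =>
    intro i
    have hsub : {ω | ¬ Good (w ω) (j+1) i} ⊆
        ⋃ t2 ∈ Finset.range (2^(j+6)), ⋃ t1 ∈ Finset.range t2,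
          ({ω | ¬ Good (w ω) j (i * 2^(j+6) + t1)} ∩
           {ω | ¬ Good (w ω) j (i * 2^(j+6) + t2)}) := by
      intro ω hω
      simp only [Set.mem_setOf_eq] at hω
      have : ¬ (∀ t1 t2 : ℕ, t1 < t2 → t2 < 2^(j+6) →
          Good (w ω) j (i * 2^(j+6) + t1) ∨ Good (w ω) j (i * 2^(j+6) + t2)) := hω
      push_neg at this
      obtain ⟨t1, t2, h12, h2m, hb1, hb2⟩ := this
      simp only [Set.mem_iUnion, Finset.mem_range, Set.mem_inter_iff, Set.mem_setOf_eq]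
      exact ⟨t2, h2m, t1, h12, hb1, hb2⟩
    have hbound : ∀ t2 ∈ Finset.range (2^(j+6)), ∀ t1 ∈ Finset.range t2,
        μ ({ω | ¬ Good (w ω) j (i * 2^(j+6) + t1)} ∩
           {ω | ¬ Good (w ω) j (i * 2^(j+6) + t2)}) ≤
          (2⁻¹:ℝ≥0∞)^(bexp j) * (2⁻¹)^(bexp j) := by
      intro t2 ht2 t1 ht1
      rw [Finset.mem_range] at ht1 ht2
      rw [bad_indep hB (by omega)]
      exact mul_le_mul' (ih _) (ih _)
    calc μ {ω | ¬ Good (w ω) (j+1) i}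
        ≤ ∑ t2 ∈ Finset.range (2^(j+6)), ∑ t1 ∈ Finset.range t2,
            μ ({ω | ¬ Good (w ω) j (i * 2^(j+6) + t1)} ∩
               {ω | ¬ Good (w ω) j (i * 2^(j+6) + t2)}) := by
          refine le_trans (measure_mono hsub) ?_
          refine le_trans (measure_biUnion_finset_le _ _) ?_
          exact Finset.sum_le_sum (fun t2 _ => measure_biUnion_finset_le _ _)
    _ ≤ ∑ t2 ∈ Finset.range (2^(j+6)), ∑ t1 ∈ Finset.range t2,
            (2⁻¹:ℝ≥0∞)^(bexp j) * (2⁻¹)^(bexp j) :=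
          Finset.sum_le_sum (fun t2 ht2 => Finset.sum_le_sum (fun t1 ht1 =>
            hbound t2 ht2 t1 ht1))
    _ ≤ ∑ _t2 ∈ Finset.range (2^(j+6)), ((2:ℝ≥0∞)^(j+6)) *
            ((2⁻¹:ℝ≥0∞)^(bexp j) * (2⁻¹)^(bexp j)) := by
          refine Finset.sum_le_sum (fun t2 ht2 => ?_)
          rw [Finset.sum_const, Finset.card_range, nsmul_eq_mul]
          refine mul_le_mul' ?_ le_rfl
          calc ((t2:ℝ≥0∞)) ≤ ((2^(j+6) : ℕ) : ℝ≥0∞) := by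
                exact_mod_cast Nat.cast_le.mpr (Finset.mem_range.mp ht2).le
          _ = (2:ℝ≥0∞)^(j+6) := by push_cast; ring
    _ = ((2:ℝ≥0∞)^(j+6)) * (((2:ℝ≥0∞)^(j+6)) *
            ((2⁻¹:ℝ≥0∞)^(bexp j) * (2⁻¹)^(bexp j))) := by
          rw [Finset.sum_const, Finset.card_range, nsmul_eq_mul]
          have : (((2^(j+6) : ℕ)):ℝ≥0∞) = (2:ℝ≥0∞)^(j+6) := by push_cast; ring
          rw [this]
    _ ≤ (2⁻¹:ℝ≥0∞)^(bexp (j+1)) := by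
          have harr : ((2:ℝ≥0∞)^(j+6)) * (((2:ℝ≥0∞)^(j+6)) *
              ((2⁻¹:ℝ≥0∞)^(bexp j) * (2⁻¹)^(bexp j)))
              = ((2:ℝ≥0∞)^(2*j+12)) * ((2⁻¹:ℝ≥0∞)^(2*bexp j)) := by
            rw [show 2*j+12 = (j+6) + (j+6) from by omega,
              show 2*bexp j = bexp j + bexp j from by omega, pow_add, pow_add]
            ring
          rw [harr]
          have hcle : 2*j+12 ≤ 2*bexp j := by
            have := Nat.one_le_two_pow (n := j)
            unfold bexp
            omega
          obtain ⟨c, hc⟩ : ∃ c, 2*bexp j = (2*j+12) + c := ⟨2*bexp j - (2*j+12), by omega⟩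
          rw [hc, show (2⁻¹:ℝ≥0∞)^(2*j+12+c) = (2⁻¹)^(2*j+12) * (2⁻¹)^c from pow_add _ _ _,
            ← mul_assoc, two_pow_cancel, one_mul]
          apply theta_anti
          have h2 : 2 * bexp j = 80 * 2^j + 4*j + 36 := by unfold bexp; ring
          have h3 : bexp (j+1) = 80 * 2^j + 2*j + 20 := by
            unfold bexp
            rw [pow_succ]
            ring
          omega

end Prob

/-- Bernoulli CMP on `ℕ`: for any `α ≥ 1` there is `p < 1` such that, for any i.i.d.
Bernoulli(`p`) family of weights, the CMP `𝒞(ℕ, r, α)` contains an infinite cluster with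
positive probability; i.e. `p_c(α) < 1`. -/
theorem bernoulli_CMP_on_N_supercritical (α : ℝ) (hα : 1 ≤ α) :
    ∃ p : ℝ, 0 ≤ p ∧ p < 1 ∧
      ∀ (Ω : Type) [MeasurableSpace Ω] (μ : Measure Ω), IsProbabilityMeasure μ →
        ∀ w : Ω → ℕ → ℝ≥0, IsBernoulliField μ p w →
          0 < μ {ω | HasInfiniteCluster pathGraphN (w ω) α} := by
  have hpow0 : (0:ℝ) < (2⁻¹:ℝ)^70 := by positivity
  have hpow1 : ((2⁻¹:ℝ)^70) ≤ 1 := by apply pow_le_one₀ <;> norm_num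
  refine ⟨1 - (2⁻¹:ℝ)^70, by linarith, by linarith, ?_⟩
  intro Ω _ μ hμ w hB
  haveI := hμ
  set E := ({ω | Good (w ω) 0 0} ∩ ⋂ j : ℕ, ({ω | Good (w ω) (j+1) 0} ∩
      ({ω | Good (w ω) j 1} ∩ {ω | Good (w ω) j 2}))) with hE
  have hEmeas : MeasurableSet E := by
    refine (good_meas hB.1 0 0).inter (MeasurableSet.iInter (fun j => ?_))
    exact (good_meas hB.1 _ _).inter ((good_meas hB.1 _ _).inter (good_meas hB.1 _ _))
  have hEsub : E ⊆ {ω | HasInfiniteCluster pathGraphN (w ω) α} := by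
    intro ω hω
    obtain ⟨h0, hrest⟩ := hω
    rw [Set.mem_iInter] at hrest
    exact determ hα h0 (fun j => ⟨(hrest j).1, (hrest j).2.1, (hrest j).2.2⟩)
  have hcsub : Eᶜ ⊆ {ω | ¬ Good (w ω) 0 0} ∪ ⋃ j : ℕ,
      ({ω | ¬ Good (w ω) (j+1) 0} ∪ ({ω | ¬ Good (w ω) j 1} ∪ {ω | ¬ Good (w ω) j 2})) := by
    intro ω hω
    by_contra hc
    simp only [Set.mem_union, Set.mem_iUnion, Set.mem_setOf_eq, not_or, not_exists,
      not_not] at hc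
    obtain ⟨h0, hrest⟩ := hc
    exact hω ⟨h0, Set.mem_iInter.mpr (fun j => ⟨(hrest j).1, (hrest j).2.1, (hrest j).2.2⟩)⟩
  have hbadb := bad_bound rfl hB
  have hEcb : μ Eᶜ ≤ (2⁻¹:ℝ≥0∞)^(bexp 0) + ∑' j : ℕ, 3 * (2⁻¹:ℝ≥0∞)^(40 + j) := by
    refine le_trans (measure_mono hcsub) ?_
    refine le_trans (measure_union_le _ _) ?_
    refine add_le_add (hbadb 0 0) ?_
    refine le_trans (measure_iUnion_le _) ?_
    refine ENNReal.tsum_le_tsum (fun j => ?_)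
    refine le_trans (measure_union_le _ _) ?_
    refine le_trans (add_le_add (hbadb (j+1) 0) (le_trans (measure_union_le _ _)
      (add_le_add (hbadb j 1) (hbadb j 2)))) ?_
    have h1 : 40 + j ≤ bexp j := by
      have := Nat.one_le_two_pow (n := j)
      unfold bexp
      omega
    have h2 : 40 + j ≤ bexp (j+1) := by
      have h3 : 2^j ≤ 2^(j+1) := Nat.pow_le_pow_right (by norm_num) (by omega)
      have := Nat.one_le_two_pow (n := j)
      unfold bexp
      omega
    calc (2⁻¹:ℝ≥0∞)^(bexp (j+1)) + ((2⁻¹)^(bexp j) + (2⁻¹)^(bexp j))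
        ≤ (2⁻¹:ℝ≥0∞)^(40+j) + ((2⁻¹)^(40+j) + (2⁻¹)^(40+j)) :=
          add_le_add (theta_anti h2) (add_le_add (theta_anti h1) (theta_anti h1))
    _ = 3 * (2⁻¹)^(40+j) := by ring
  have htsum : ∑' j : ℕ, 3 * (2⁻¹:ℝ≥0∞)^(40+j) = 6 * (2⁻¹)^40 := by
    calc ∑' j : ℕ, 3 * (2⁻¹:ℝ≥0∞)^(40+j) = ∑' j : ℕ, (3 * (2⁻¹)^40) * (2⁻¹)^j := by
          congr 1
          funext j
          rw [pow_add]
          ring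
    _ = (3 * (2⁻¹)^40) * ∑' j : ℕ, (2⁻¹:ℝ≥0∞)^j := ENNReal.tsum_mul_left
    _ = (3 * (2⁻¹)^40) * 2 := by
          rw [ENNReal.tsum_geometric, ENNReal.one_sub_inv_two, inv_inv]
    _ = 6 * (2⁻¹)^40 := by ring
  have hbound : (2⁻¹:ℝ≥0∞)^(bexp 0) + 6 * (2⁻¹)^40 ≤ 2⁻¹ := by
    have hb0 : (2⁻¹:ℝ≥0∞)^(bexp 0) ≤ (2⁻¹)^40 := theta_anti (by norm_num [bexp])
    have he7 : (2⁻¹:ℝ≥0∞)^40 + 6*(2⁻¹)^40 = 7*(2⁻¹)^40 := by ring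
    calc (2⁻¹:ℝ≥0∞)^(bexp 0) + 6*(2⁻¹)^40 ≤ (2⁻¹)^40 + 6*(2⁻¹)^40 :=
          add_le_add hb0 le_rfl
    _ = 7*(2⁻¹)^40 := he7
    _ ≤ 8*(2⁻¹)^40 := mul_le_mul' (by norm_num) le_rfl
    _ = (2⁻¹)^37 := by
          rw [show (8:ℝ≥0∞) = 2^3 by norm_num, show (40:ℕ) = 3 + 37 from rfl,
            pow_add, ← mul_assoc, two_pow_cancel, one_mul]
    _ ≤ (2⁻¹:ℝ≥0∞)^1 := theta_anti (by norm_num)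
    _ = 2⁻¹ := pow_one _
  have hlt : μ Eᶜ < 1 := by
    have hhalf : (2⁻¹:ℝ≥0∞) < 1 := by
      rw [ENNReal.inv_lt_one]
      norm_num
    have hstep : μ Eᶜ ≤ 2⁻¹ := by
      refine le_trans hEcb ?_
      rw [htsum]
      exact hbound
    exact lt_of_le_of_lt hstep hhalf
  have hpos : 0 < μ E := by
    by_contra h
    push_neg at h
    have h0 : μ E = 0 := le_antisymm h zero_le
    have hcompl := prob_compl_eq_one_sub (μ := μ) hEmeas
    rw [h0, tsub_zero] at hcompl
    rw [hcompl] at hlt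
    exact lt_irrefl _ hlt
  exact lt_of_lt_of_le hpos (measure_mono hEsub)

end CMPPaper
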